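/- For every finite simple graph G there exists a convex drawing σ of G with 3·cr(σ) ≥ M(G); that is, the maximum convex crossing number of G is at least M(G)/3. -/

import Mathlib

/-- Two edges (as unordered pairs of vertices) share no endpoint, i.e. they are independent. -/
def Sym2Indep {V : Type*} (e f : Sym2 V) : Prop := ∀ x : V, x ∈ e → x ∉ f

/-- `M(G)`: the number of unordered pairs of edges of `G` that share no endpoint. -/
noncomputable def indepPairs {V : Type*} (G : SimpleGraph V) : ℕ :=
  {p : Sym2 (Sym2 V) | ∃ e f : Sym2 V,
    p = s(e, f) ∧ e ∈ G.edgeSet ∧ f ∈ G.edgeSet ∧ Sym2Indep e f}.ncard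

/-- `z` lies on the open cyclic arc from `x` to `y` in `ZMod n`. -/
def InArc {n : ℕ} (x y z : ZMod n) : Prop :=
  0 < (z - x).val ∧ (z - x).val < (y - x).val

/-- The independent edges `e` and `f` cross in the convex drawing `σ`:
their endpoints alternate in the cyclic order. -/
def ConvexCross {V : Type*} {n : ℕ} (σ : V → ZMod n) (e f : Sym2 V) : Prop :=
  Sym2Indep e f ∧ ∃ a b c d : V, e = s(a, b) ∧ f = s(c, d) ∧
    Xor' (InArc (σ a) (σ b) (σ c)) (InArc (σ a) (σ b) (σ d))

/-- `cr(σ)`: the number of unordered pairs of edges of `G` that cross in the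
convex drawing `σ`. -/
noncomputable def convexCr {V : Type*} {n : ℕ} (G : SimpleGraph V) (σ : V → ZMod n) : ℕ :=
  {p : Sym2 (Sym2 V) | ∃ e f : Sym2 V,
    p = s(e, f) ∧ e ∈ G.edgeSet ∧ f ∈ G.edgeSet ∧ ConvexCross σ e f}.ncard

lemma key_geo {n : ℕ} [NeZero n] {x y z w : ZMod n}
    (hxy : x ≠ y) (hxz : x ≠ z) (hxw : x ≠ w)
    (hyz : y ≠ z) (hyw : y ≠ w) (hzw : z ≠ w) :
    Xor' (InArc x y z) (InArc x y w) ∨ Xor' (InArc x z w) (InArc x z y) ∨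
      Xor' (InArc x w y) (InArc x w z) := by
  have hval : ∀ u v : ZMod n, u ≠ v → (u - x).val ≠ (v - x).val := fun u v h hv =>
    h (by have := ZMod.val_injective n hv; linear_combination (norm := ring_nf) this)
  have hpos : ∀ u : ZMod n, x ≠ u → 0 < (u - x).val := fun u h =>
    ZMod.val_pos.mpr (sub_ne_zero.mpr (Ne.symm h))
  have hY := hpos y hxy; have hZ := hpos z hxz; have hW := hpos w hxw
  have hYZ := hval y z hyz; have hYW := hval y w hyw; have hZW := hval z w hzw
  unfold InArc Xor'
  simp only [xor_def]
  omega

/-- Every finite simple graph `G` has a convex drawing `σ` with `3 · cr(σ) ≥ M(G)`. -/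
theorem convex_drawing_third_of_indep_pairs {V : Type*} [Fintype V] (G : SimpleGraph V) :
    ∃ σ : V → ZMod (Fintype.card V), Function.Injective σ ∧
      indepPairs G ≤ 3 * convexCr G σ := by
  classical
  set n := Fintype.card V with hn
  by_cases hV : Nonempty V
  swap
  · -- empty case
    haveI : IsEmpty V := not_nonempty_iff.mp hV
    refine ⟨fun v => isEmptyElim v, fun v => isEmptyElim v, ?_⟩
    have h0 : indepPairs G = 0 := by
      unfold indepPairs
      convert Set.ncard_empty (Sym2 (Sym2 V))
      ext p
      simp only [Set.mem_setOf_eq, Set.mem_empty_iff_false, iff_false, not_exists]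
      rintro e f ⟨-, he, -⟩
      exact isEmptyElim e.out.1
    simp [h0]
  haveI : NeZero n := ⟨Fintype.card_ne_zero⟩
  -- the independent-pairs set and the crossing set as finsets
  set S : Set (Sym2 (Sym2 V)) := {p | ∃ e f : Sym2 V,
    p = s(e, f) ∧ e ∈ G.edgeSet ∧ f ∈ G.edgeSet ∧ Sym2Indep e f} with hS
  set Cset : (V ≃ ZMod n) → Set (Sym2 (Sym2 V)) := fun τ => {p | ∃ e f : Sym2 V,
    p = s(e, f) ∧ e ∈ G.edgeSet ∧ f ∈ G.edgeSet ∧ ConvexCross ⇑τ e f} with hC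
  have hsub : ∀ τ, Cset τ ⊆ S := by
    rintro τ p ⟨e, f, hp, he, hf, hcross⟩
    exact ⟨e, f, hp, he, hf, hcross.1⟩
  set Sfin : Finset (Sym2 (Sym2 V)) := (Set.toFinite S).toFinset with hSfin
  have hMS : indepPairs G = Sfin.card := Set.ncard_eq_toFinset_card S (Set.toFinite S)
  have hcr : ∀ τ : V ≃ ZMod n, convexCr G ⇑τ = (Sfin.filter (fun p => p ∈ Cset τ)).card := by
    intro τ
    have : convexCr G ⇑τ = (Set.toFinite (Cset τ)).toFinset.card :=
      Set.ncard_eq_toFinset_card _ _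
    rw [this]
    congr 1
    ext p
    simp only [Set.Finite.mem_toFinset, Finset.mem_filter, hSfin]
    exact ⟨fun h => ⟨hsub τ h, h⟩, fun h => h.2⟩
  -- per-pair counting
  have hper : ∀ p ∈ Sfin,
      (Finset.univ : Finset (V ≃ ZMod n)).card ≤
        3 * (Finset.univ.filter (fun τ : V ≃ ZMod n => p ∈ Cset τ)).card := by
    intro p hp
    rw [hSfin, Set.Finite.mem_toFinset] at hp
    obtain ⟨e, f, hpef, he, hf, hind⟩ := hp
    obtain ⟨a, b, hab⟩ : ∃ a b, e = s(a, b) := Sym2.exists.mp ⟨e, rfl⟩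
    obtain ⟨c, d, hcd⟩ : ∃ c d, f = s(c, d) := Sym2.exists.mp ⟨f, rfl⟩
    have hAdjab : G.Adj a b := by rw [hab] at he; exact he
    have hAdjcd : G.Adj c d := by rw [hcd] at hf; exact hf
    have hab' : a ≠ b := hAdjab.ne
    have hcd' : c ≠ d := hAdjcd.ne
    have hac : a ≠ c := fun h => hind a (by rw [hab]; exact Sym2.mem_mk_left a b)
      (by rw [hcd, h]; exact Sym2.mem_mk_left c d)
    have had : a ≠ d := fun h => hind a (by rw [hab]; exact Sym2.mem_mk_left a b)
      (by rw [hcd, h]; exact Sym2.mem_mk_right c d)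
    have hbc : b ≠ c := fun h => hind b (by rw [hab]; exact Sym2.mem_mk_right a b)
      (by rw [hcd, h]; exact Sym2.mem_mk_left c d)
    have hbd : b ≠ d := fun h => hind b (by rw [hab]; exact Sym2.mem_mk_right a b)
      (by rw [hcd, h]; exact Sym2.mem_mk_right c d)
    set c3 : Equiv.Perm V := (Equiv.swap c d).trans (Equiv.swap b c) with hc3
    have hc3a : c3 a = a := by
      rw [hc3]; simp [Equiv.swap_apply_of_ne_of_ne, hac, had, hab']
    have hc3b : c3 b = c := by
      rw [hc3]; simp [Equiv.swap_apply_of_ne_of_ne, hbc, hbd]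
    have hc3c : c3 c = d := by
      rw [hc3]; simp [Equiv.swap_apply_of_ne_of_ne, hbd.symm, hcd'.symm]
    have hc3d : c3 d = b := by
      rw [hc3]; simp
    set Φ : (V ≃ ZMod n) → (V ≃ ZMod n) := fun τ => c3.trans τ with hΦ
    set Ψ : (V ≃ ZMod n) → (V ≃ ZMod n) := fun τ => c3.symm.trans τ with hΨ
    have hΨΦ : ∀ τ, Ψ (Φ τ) = τ := by
      intro τ; rw [hΦ, hΨ]; ext v; simp
    -- crossing membership via given witnesses
    have hQ : ∀ τ : V ≃ ZMod n,
        Xor' (InArc (τ a) (τ b) (τ c)) (InArc (τ a) (τ b) (τ d)) → p ∈ Cset τ := by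
      intro τ hx
      exact ⟨e, f, hpef, he, hf, hind, a, b, c, d, hab, hcd, hx⟩
    have h3 : ∀ τ : V ≃ ZMod n, p ∈ Cset τ ∨ p ∈ Cset (Φ τ) ∨ p ∈ Cset (Φ (Φ τ)) := by
      intro τ
      have hkey := key_geo (x := τ a) (y := τ b) (z := τ c) (w := τ d)
        (fun h => hab' (τ.injective h)) (fun h => hac (τ.injective h))
        (fun h => had (τ.injective h)) (fun h => hbc (τ.injective h))
        (fun h => hbd (τ.injective h)) (fun h => hcd' (τ.injective h))
      have e1 : (Φ τ) a = τ a := by simp [hΦ, hc3a]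
      have e2 : (Φ τ) b = τ c := by simp [hΦ, hc3b]
      have e3 : (Φ τ) c = τ d := by simp [hΦ, hc3c]
      have e4 : (Φ τ) d = τ b := by simp [hΦ, hc3d]
      rcases hkey with h | h | h
      · exact Or.inl (hQ τ h)
      · refine Or.inr (Or.inl (hQ (Φ τ) ?_))
        rw [e1, e2, e3, e4]
        exact h
      · refine Or.inr (Or.inr (hQ (Φ (Φ τ)) ?_))
        have f1 : (Φ (Φ τ)) a = τ a := by simp [hΦ, hc3a]
        have f2 : (Φ (Φ τ)) b = τ d := by simp [hΦ, hc3b, hc3c]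
        have f3 : (Φ (Φ τ)) c = τ b := by simp [hΦ, hc3c, hc3d]
        have f4 : (Φ (Φ τ)) d = τ c := by simp [hΦ, hc3d, hc3b]
        rw [f1, f2, f3, f4]
        exact h
    set g : (V ≃ ZMod n) → (V ≃ ZMod n) := fun τ =>
      if p ∈ Cset τ then τ else if p ∈ Cset (Φ τ) then Φ τ else Φ (Φ τ) with hg
    refine Finset.card_le_mul_card_image_of_maps_to (f := g) ?_ 3 ?_
    · intro τ _
      rw [Finset.mem_filter]
      refine ⟨Finset.mem_univ _, ?_⟩
      rw [hg]
      rcases h3 τ with h | h | h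
      · simpa [h]
      · by_cases h1 : p ∈ Cset τ
        · simpa [h1]
        · simpa [h1, h]
      · by_cases h1 : p ∈ Cset τ
        · simpa [h1]
        · by_cases h2 : p ∈ Cset (Φ τ)
          · simpa [h1, h2]
          · simpa [h1, h2] using h
    · intro σ _
      have hsubfib : (Finset.univ.filter (fun τ => g τ = σ)) ⊆ {σ, Ψ σ, Ψ (Ψ σ)} := by
        intro τ hτ
        rw [Finset.mem_filter] at hτ
        have hτ2 : (if p ∈ Cset τ then τ else if p ∈ Cset (Φ τ) then Φ τ else Φ (Φ τ)) = σ :=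
          hτ.2
        simp only [Finset.mem_insert, Finset.mem_singleton]
        by_cases h1 : p ∈ Cset τ
        · rw [if_pos h1] at hτ2; exact Or.inl hτ2
        · rw [if_neg h1] at hτ2
          by_cases h2 : p ∈ Cset (Φ τ)
          · rw [if_pos h2] at hτ2
            exact Or.inr (Or.inl (by rw [← hτ2, hΨΦ]))
          · rw [if_neg h2] at hτ2
            refine Or.inr (Or.inr ?_)
            rw [← hτ2, hΨΦ, hΨΦ]
      calc (Finset.univ.filter (fun τ => g τ = σ)).card
          ≤ ({σ, Ψ σ, Ψ (Ψ σ)} : Finset (V ≃ ZMod n)).card := Finset.card_le_card hsubfib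
        _ ≤ 3 := by
            refine le_trans (Finset.card_insert_le _ _) ?_
            exact Nat.succ_le_succ (le_trans (Finset.card_insert_le _ _)
              (Nat.succ_le_succ (Finset.card_singleton _).le))
  -- now sum up
  have hcard : Fintype.card (ZMod n) = Fintype.card V := by rw [ZMod.card]
  have hEpos : 0 < (Finset.univ : Finset (V ≃ ZMod n)).card := by
    rw [Finset.card_univ, Fintype.card_pos_iff]
    exact ⟨Fintype.equivOfCardEq hcard.symm⟩
  set E : Finset (V ≃ ZMod n) := Finset.univ with hE
  have hsum : Sfin.card * E.card ≤ 3 * ∑ τ ∈ E, convexCr G ⇑τ := by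
    calc Sfin.card * E.card = ∑ p ∈ Sfin, E.card := by
          rw [Finset.sum_const, smul_eq_mul, mul_comm]
      _ ≤ ∑ p ∈ Sfin, 3 * (E.filter (fun τ => p ∈ Cset τ)).card :=
          Finset.sum_le_sum hper
      _ = 3 * ∑ p ∈ Sfin, (E.filter (fun τ => p ∈ Cset τ)).card := by
          rw [Finset.mul_sum]
      _ = 3 * ∑ τ ∈ E, convexCr G ⇑τ := by
          congr 1
          simp only [hcr, Finset.card_filter]
          rw [Finset.sum_comm]
  by_contra hcon
  push_neg at hcon
  have hlt : ∀ τ : V ≃ ZMod n, 3 * convexCr G ⇑τ < Sfin.card := by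
    intro τ
    have := hcon ⇑τ τ.injective
    rwa [hMS] at this
  have : 3 * ∑ τ ∈ E, convexCr G ⇑τ ≤ (Sfin.card - 1) * E.card := by
    rw [Finset.mul_sum]
    calc ∑ τ ∈ E, 3 * convexCr G ⇑τ ≤ ∑ τ ∈ E, (Sfin.card - 1) := by
          refine Finset.sum_le_sum fun τ _ => ?_
          have := hlt τ; omega
      _ = (Sfin.card - 1) * E.card := by rw [Finset.sum_const, smul_eq_mul, mul_comm]
  have hSpos : 0 < Sfin.card := by
    have := hlt (Fintype.equivOfCardEq hcard.symm); omega
  have h1 : (Sfin.card - 1) * E.card < Sfin.card * E.card :=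
    Nat.mul_lt_mul_of_lt_of_le (Nat.sub_lt hSpos one_pos) le_rfl hEpos
  exact lt_irrefl _ (lt_of_le_of_lt (hsum.trans this) h1)
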